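/- arXiv:1205.2097 — 2 statements merged into one kernel-verified Lean document; each statement's English description precedes it below -/
import Mathlib

section
/- The even moments of the semicircle distribution on [-2,2] are the Catalan numbers and the odd moments vanish: the integral of t^n * sqrt(4-t^2)/(2*pi) dt over [-2,2] equals Cat_{n/2} if n is even and 0 if n is odd. -/
open Real

noncomputable def J (n : ℕ) : ℝ := ∫ t in (-2 : ℝ)..2, t ^ n * Real.sqrt (4 - t ^ 2)

lemma J_integrable (n : ℕ) : IntervalIntegrable (fun t : ℝ => t ^ n * Real.sqrt (4 - t ^ 2)) MeasureTheory.volume (-2) 2 := by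
  apply Continuous.intervalIntegrable
  fun_prop

lemma J_zero : J 0 = 2 * π := by
  have h : ∀ t : ℝ, Real.sqrt (4 - t ^ 2) = 2 * Real.sqrt (1 - (t / 2) ^ 2) := by
    intro t
    rw [show (4:ℝ) - t ^ 2 = 4 * (1 - (t/2)^2) by ring, Real.sqrt_mul (by norm_num),
      show Real.sqrt 4 = 2 by rw [show (4:ℝ) = 2^2 by norm_num, Real.sqrt_sq]; norm_num]
  have := intervalIntegral.integral_comp_div (a := -2) (b := 2) (c := (2:ℝ))
    (fun x => Real.sqrt (1 - x ^ 2)) (by norm_num)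
  simp only [J, pow_zero, one_mul]
  simp only [h]
  rw [intervalIntegral.integral_const_mul, this]
  norm_num [integral_sqrt_one_sub_sq]
  ring

lemma J_odd (n : ℕ) (hn : Odd n) : J n = 0 := by
  have key : ∀ x : ℝ, (-x) ^ n * Real.sqrt (4 - (-x) ^ 2) = -(x ^ n * Real.sqrt (4 - x ^ 2)) := by
    intro x; rw [hn.neg_pow, neg_sq]; ring
  have h := intervalIntegral.integral_comp_neg (a := (-2:ℝ)) (b := 2)
    (f := fun t : ℝ => t ^ n * Real.sqrt (4 - t ^ 2))
  simp only [key, intervalIntegral.integral_neg, neg_neg] at h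
  have : -J n = J n := h
  linarith

lemma J_rec (n : ℕ) : ((n:ℝ) + 4) * J (n + 2) = 4 * ((n:ℝ) + 1) * J n := by
  set F : ℝ → ℝ := fun t => t ^ (n+1) * ((4 - t ^ 2) * Real.sqrt (4 - t ^ 2)) with hFdef
  set f' : ℝ → ℝ := fun t =>
    4 * ((n:ℝ)+1) * (t ^ n * Real.sqrt (4 - t ^ 2)) - ((n:ℝ)+4) * (t ^ (n+2) * Real.sqrt (4 - t ^ 2)) with hf'def
  have hderiv : ∀ t ∈ Set.Ioo (-2:ℝ) 2, HasDerivWithinAt F (f' t) (Set.Ioi t) t := by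
    intro t ht
    have h4 : (0:ℝ) < 4 - t ^ 2 := by nlinarith [ht.1, ht.2]
    have hu : HasDerivAt (fun t : ℝ => 4 - t ^ 2) (-(2 * t)) t := by
      simpa using ((hasDerivAt_pow 2 t).const_sub 4)
    have hg : HasDerivAt (fun t : ℝ => Real.sqrt (4 - t ^ 2))
        (1 / (2 * Real.sqrt (4 - t ^ 2)) * (-(2 * t))) t :=
      (Real.hasDerivAt_sqrt h4.ne').comp t hu
    have hP : HasDerivAt F
        (((n:ℝ)+1) * t ^ n * ((4 - t ^ 2) * Real.sqrt (4 - t ^ 2)) +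
          t ^ (n+1) * ((-(2 * t)) * Real.sqrt (4 - t ^ 2) +
            (4 - t ^ 2) * (1 / (2 * Real.sqrt (4 - t ^ 2)) * (-(2 * t))))) t := by
      have := (hasDerivAt_pow (n+1) t).mul (hu.mul hg)
      convert this using 1
      · rfl
      · rfl
      · rfl
      simp [Nat.add_sub_cancel]
    have hs : Real.sqrt (4 - t ^ 2) ^ 2 = 4 - t ^ 2 := Real.sq_sqrt h4.le
    have hs0 : Real.sqrt (4 - t ^ 2) ≠ 0 := by positivity
    have heq : (((n:ℝ)+1) * t ^ n * ((4 - t ^ 2) * Real.sqrt (4 - t ^ 2)) +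
          t ^ (n+1) * ((-(2 * t)) * Real.sqrt (4 - t ^ 2) +
            (4 - t ^ 2) * (1 / (2 * Real.sqrt (4 - t ^ 2)) * (-(2 * t))))) = f' t := by
      rw [hf'def]
      field_simp
      linear_combination (t ^ (n + 2)) * hs
    exact (heq ▸ hP).hasDerivWithinAt
  have hcont : ContinuousOn F (Set.Icc (-2:ℝ) 2) := by fun_prop
  have hint : IntervalIntegrable f' MeasureTheory.volume (-2) 2 := by
    apply Continuous.intervalIntegrable; fun_prop
  have key := intervalIntegral.integral_eq_sub_of_hasDeriv_right_of_le (by norm_num)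
    hcont hderiv hint
  have hF2 : F 2 = 0 := by norm_num [hFdef]
  have hFm2 : F (-2) = 0 := by norm_num [hFdef]
  rw [hF2, hFm2, sub_zero] at key
  have hsplit : (∫ t in (-2:ℝ)..2, f' t) = 4 * ((n:ℝ)+1) * J n - ((n:ℝ)+4) * J (n+2) := by
    rw [hf'def]
    rw [intervalIntegral.integral_sub ((J_integrable n).const_mul _)
      ((J_integrable (n+2)).const_mul _),
      intervalIntegral.integral_const_mul, intervalIntegral.integral_const_mul]
    rfl
  rw [hsplit] at key
  linarith

lemma cat_rec (k : ℕ) : (k + 2) * catalan (k + 1) = 2 * (2 * k + 1) * catalan k := by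
  have h1 : (k + 2) * catalan (k + 1) = Nat.centralBinom (k + 1) :=
    succ_mul_catalan_eq_centralBinom (k + 1)
  have h2 := Nat.succ_mul_centralBinom_succ k
  have h3 : (k + 1) * catalan k = Nat.centralBinom k := succ_mul_catalan_eq_centralBinom k
  have h4 : (k + 1) * Nat.centralBinom (k + 1) = (k + 1) * (2 * (2 * k + 1) * catalan k) := by
    rw [h2, ← h3]; ring
  rw [h1, Nat.eq_of_mul_eq_mul_left (Nat.succ_pos k) h4]

lemma J_even (k : ℕ) : J (2 * k) = catalan k * (2 * π) := by
  induction k with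
  | zero => simpa using J_zero
  | succ k ih =>
    have hrec := J_rec (2 * k)
    have hcat : ((k:ℝ) + 2) * catalan (k + 1) = 2 * (2 * (k:ℝ) + 1) * catalan k := by
      exact_mod_cast congrArg (Nat.cast : ℕ → ℝ) (cat_rec k)
    have h2 : (2 * (k:ℝ) + 4) ≠ 0 := by positivity
    have : 2 * (k + 1) = 2 * k + 2 := by ring
    rw [this]
    push_cast at hrec
    have goal : (2 * (k:ℝ) + 4) * J (2 * k + 2) = (2 * (k:ℝ) + 4) * ((catalan (k+1) : ℝ) * (2 * π)) := by
      rw [show (2 * (k:ℝ) + 4) * ((catalan (k+1) : ℝ) * (2 * π)) =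
        2 * ((((k:ℝ) + 2) * catalan (k+1)) * (2 * π)) by ring, hcat]
      rw [hrec, ih]; ring
    exact mul_left_cancel₀ h2 goal

/-- The moments of the semicircle distribution on `[-2,2]`: the even moments are the
Catalan numbers and the odd moments vanish. -/
theorem semicircle_moments (n : ℕ) :
    (∫ t in (-2 : ℝ)..2, t ^ n * (Real.sqrt (4 - t ^ 2) / (2 * π))) =
      if Even n then (catalan (n / 2) : ℝ) else 0 := by
  have hpi : (2 * π) ≠ 0 := by positivity
  have hI : (∫ t in (-2 : ℝ)..2, t ^ n * (Real.sqrt (4 - t ^ 2) / (2 * π))) = J n / (2 * π) := by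
    simp_rw [← mul_div_assoc]
    rw [intervalIntegral.integral_div]
    rfl
  rw [hI]
  by_cases h : Even n
  · obtain ⟨k, hk⟩ := h
    have hn : n = 2 * k := by omega
    have hk2 : n / 2 = k := by omega
    rw [if_pos ⟨k, hk⟩, hk2, hn, J_even, mul_div_cancel_right₀ _ hpi]
  · rw [if_neg h, J_odd n (Nat.not_even_iff_odd.mp h), zero_div]
end

section
/- Two numerical sequences (m_n) and (kappa_n) satisfy the free moment-cumulant relations m_n = sum over non-crossing partitions pi of [n] of the product over blocks B of kappa_{|B|} for all n ≥ 1, if and only if the ordinary generating functions L(z) = 1 + sum m_n z^n and K(z) = 1 + sum kappa_n z^n satisfy L(z) = K(z * L(z)) in the formal power series ring. -/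
open Classical PowerSeries

/-- Non-crossing condition for a set partition of `{1,…,n}`. -/
def IsNonCrossing {n : ℕ} (π : Finpartition (Finset.univ : Finset (Fin n))) : Prop :=
  ¬ ∃ a b c d : Fin n, a < b ∧ b < c ∧ c < d ∧
    ∃ B ∈ π.parts, ∃ B' ∈ π.parts, B ≠ B' ∧ a ∈ B ∧ c ∈ B ∧ b ∈ B' ∧ d ∈ B'

/-- The free moment-cumulant sum `∑_{π ∈ NC(n)} ∏_{B ∈ π} κ_{|B|}`. -/
noncomputable def ncMomentSum (κ : ℕ → ℂ) (n : ℕ) : ℂ :=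
  ∑ π ∈ Finset.univ.filter
      (fun π : Finpartition (Finset.univ : Finset (Fin n)) => IsNonCrossing π),
    ∏ B ∈ π.parts, κ B.card

section Aux

open Finset

set_option linter.unusedSectionVars false

variable {α : Type*} [LinearOrder α] [DecidableEq α] {β : Type*} [LinearOrder β] [DecidableEq β]

/-- General noncrossing condition for a partition of a finset in a linear order. -/
def NCCond {S : Finset α} (π : Finpartition S) : Prop :=
  ¬ ∃ a b c d : α, a < b ∧ b < c ∧ c < d ∧
    ∃ B ∈ π.parts, ∃ B' ∈ π.parts, B ≠ B' ∧ a ∈ B ∧ c ∈ B ∧ b ∈ B' ∧ d ∈ B'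

noncomputable def ncF (κ : ℕ → ℂ) (S : Finset α) : ℂ :=
  ∑ π ∈ Finset.univ.filter (fun π : Finpartition S => NCCond π), ∏ B ∈ π.parts, κ B.card

set_option maxHeartbeats 2000000 in
lemma ncMomentSum_eq_ncF (κ : ℕ → ℂ) (n : ℕ) :
    ncMomentSum κ n = ncF κ (Finset.univ : Finset (Fin n)) := by
  unfold ncMomentSum ncF
  have hpq : (fun π : Finpartition (Finset.univ : Finset (Fin n)) => IsNonCrossing π)
      = (fun π : Finpartition (Finset.univ : Finset (Fin n)) => NCCond π) := rfl
  simp only [hpq]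

lemma mem_iff_exists_part {S : Finset α} (P : Finpartition S) {a : α} :
    a ∈ S ↔ ∃ C ∈ P.parts, a ∈ C := by
  constructor
  · exact fun h => P.exists_mem h
  · rintro ⟨C, hC, haC⟩
    exact P.le hC haC

/-- Transport a finpartition along a map injective on the base set. -/
noncomputable def Finpartition.mapImage {S : Finset α} (P : Finpartition S) (f : α → β)
    (hf : Set.InjOn f S) : Finpartition (S.image f) where
  parts := P.parts.image (Finset.image f)
  supIndep := by
    rw [Finset.supIndep_iff_pairwiseDisjoint]
    rintro x h1 y h2 hne
    simp only [coe_image, Set.mem_image, mem_coe] at h1 h2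
    obtain ⟨C, hC, rfl⟩ := h1
    obtain ⟨D, hD, rfl⟩ := h2
    have hCD : C ≠ D := fun h => hne (by rw [h])
    have hdisj := P.disjoint hC hD hCD
    simp only [Function.onFun, id] at hdisj ⊢
    rw [Finset.disjoint_left] at hdisj ⊢
    rintro x hx hx'
    simp only [Finset.mem_image] at hx hx'
    obtain ⟨c, hc, rfl⟩ := hx
    obtain ⟨d, hd, hde⟩ := hx'
    have : d = c := hf (P.le hD hd) (P.le hC hc) hde
    exact hdisj hc (this ▸ hd)
  sup_parts := by
    ext x
    simp only [Finset.mem_sup, Finset.mem_image, id]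
    constructor
    · rintro ⟨y, hy, hxy⟩
      obtain ⟨C, hC, rfl⟩ := hy
      simp only [Finset.mem_image] at hxy
      obtain ⟨c, hc, rfl⟩ := hxy
      exact ⟨c, P.le hC hc, rfl⟩
    · rintro ⟨a, ha, rfl⟩
      obtain ⟨C, hC, haC⟩ := P.exists_mem ha
      exact ⟨C.image f, ⟨C, hC, rfl⟩, Finset.mem_image_of_mem f haC⟩
  bot_notMem := by
    simp only [Finset.bot_eq_empty, Finset.mem_image]
    rintro ⟨C, hC, hCe⟩
    have := P.nonempty_of_mem_parts hC
    rw [Finset.image_eq_empty] at hCe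
    simp [hCe] at this

@[simp] lemma Finpartition.parts_mapImage {S : Finset α} (P : Finpartition S) (f : α → β)
    (hf : Set.InjOn f S) : (P.mapImage f hf).parts = P.parts.image (Finset.image f) := rfl

lemma image_cancel {S C D : Finset α} {f : α → β} (hf : Set.InjOn f S)
    (hC : C ⊆ S) (hD : D ⊆ S) (h : C.image f = D.image f) : C = D := by
  ext a
  constructor
  · intro ha
    have : f a ∈ D.image f := h ▸ Finset.mem_image_of_mem f ha
    obtain ⟨d, hd, hde⟩ := Finset.mem_image.1 this
    exact hf (hD hd) (hC ha) hde ▸ hd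
  · intro ha
    have : f a ∈ C.image f := h ▸ Finset.mem_image_of_mem f ha
    obtain ⟨c, hc, hce⟩ := Finset.mem_image.1 this
    exact hf (hC hc) (hD ha) hce ▸ hc

lemma NCCond.mapImage {S : Finset α} {P : Finpartition S} (h : NCCond P) {f : α → β}
    (hf : StrictMonoOn f S) : NCCond (P.mapImage f hf.injOn) := by
  rintro ⟨a, b, c, d, hab, hbc, hcd, B1, hB1, B2, hB2, hne, haB, hcB, hbB, hdB⟩
  simp only [Finpartition.parts_mapImage, Finset.mem_image] at hB1 hB2
  obtain ⟨C1, hC1, rfl⟩ := hB1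
  obtain ⟨C2, hC2, rfl⟩ := hB2
  obtain ⟨a', ha', rfl⟩ := Finset.mem_image.1 haB
  obtain ⟨c', hc', rfl⟩ := Finset.mem_image.1 hcB
  obtain ⟨b', hb', rfl⟩ := Finset.mem_image.1 hbB
  obtain ⟨d', hd', rfl⟩ := Finset.mem_image.1 hdB
  have hC1S := P.le hC1
  have hC2S := P.le hC2
  have h1 : a' < b' := (hf.lt_iff_lt (hC1S ha') (hC2S hb')).1 hab
  have h2 : b' < c' := (hf.lt_iff_lt (hC2S hb') (hC1S hc')).1 hbc
  have h3 : c' < d' := (hf.lt_iff_lt (hC1S hc') (hC2S hd')).1 hcd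
  exact h ⟨a', b', c', d', h1, h2, h3, C1, hC1, C2, hC2,
    fun he => hne (by rw [he]), ha', hc', hb', hd'⟩

@[simp] lemma Finpartition.parts_copy' {α : Type*} [Lattice α] [OrderBot α] {a b : α}
    (P : Finpartition a) (h : a = b) : (P.copy h).parts = P.parts := rfl

lemma ncF_empty (κ : ℕ → ℂ) : ncF κ (∅ : Finset α) = 1 := by
  have h1 : ∀ π : Finpartition (∅ : Finset α), π.parts = ∅ := fun π => by
    rw [Finpartition.parts_eq_empty_iff, Finset.bot_eq_empty]
  have h2 : ∀ π : Finpartition (∅ : Finset α), NCCond π := by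
    rintro π ⟨a, b, c, d, _, _, _, B, hB, _⟩
    rw [h1 π] at hB
    exact absurd hB (Finset.notMem_empty _)
  rw [ncF, Finset.filter_true_of_mem (fun π _ => h2 π)]
  rw [Finset.sum_congr rfl (fun π _ => by rw [h1 π, Finset.prod_empty])]
  rw [Finset.sum_const, Finset.card_univ]
  have h3 : Fintype.card (Finpartition (∅ : Finset α)) = 1 := by
    rw [Fintype.card_eq_one_iff]
    refine ⟨(Finpartition.empty (Finset α)).copy Finset.bot_eq_empty, fun π => ?_⟩
    apply Finpartition.ext
    rw [h1 π, Finpartition.parts_copy']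
    rfl
  rw [h3, one_smul]

lemma ncF_image (κ : ℕ → ℂ) {f : α → β} {S : Finset α} (hf : StrictMonoOn f S) :
    ncF κ (S.image f) = ncF κ S := by
  rcases S.eq_empty_or_nonempty with rfl | hS
  · rw [Finset.image_empty, ncF_empty, ncF_empty]
  have hne : Nonempty α := ⟨hS.choose⟩
  set g : β → α := fun b => if h : ∃ a ∈ S, f a = b then h.choose else Classical.arbitrary α
    with hgdef
  have hgf : ∀ a ∈ S, g (f a) = a := by
    intro a ha
    have hex : ∃ a' ∈ S, f a' = f a := ⟨a, ha, rfl⟩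
    simp only [hgdef, dif_pos hex]
    exact hf.injOn hex.choose_spec.1 ha hex.choose_spec.2
  have hfg : ∀ b ∈ S.image f, f (g b) = b := by
    intro b hb
    obtain ⟨a, ha, rfl⟩ := Finset.mem_image.1 hb
    rw [hgf a ha]
  have hgmono : StrictMonoOn g (S.image f : Finset β) := by
    intro x hx y hy hxy
    obtain ⟨a, ha, rfl⟩ := Finset.mem_image.1 hx
    obtain ⟨b, hb, rfl⟩ := Finset.mem_image.1 hy
    rw [hgf a ha, hgf b hb]
    exact (hf.lt_iff_lt ha hb).1 hxy
  have himg : (S.image f).image g = S := by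
    rw [Finset.image_image]
    exact (Finset.image_congr fun a ha => hgf a ha).trans Finset.image_id
  symm
  refine Finset.sum_bij (fun P _ => P.mapImage f hf.injOn) ?_ ?_ ?_ ?_
  · intro P hP
    simp only [Finset.mem_filter, Finset.mem_univ, true_and] at hP ⊢
    exact hP.mapImage hf
  · intro P1 h1 P2 h2 he
    have hparts := congrArg Finpartition.parts he
    simp only [Finpartition.parts_mapImage] at hparts
    apply Finpartition.ext
    ext C
    constructor
    · intro hC
      have : C.image f ∈ P2.parts.image (Finset.image f) :=
        hparts ▸ Finset.mem_image_of_mem _ hC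
      obtain ⟨D, hD, hDe⟩ := Finset.mem_image.1 this
      exact image_cancel hf.injOn (P2.le hD) (P1.le hC) hDe ▸ hD
    · intro hC
      have : C.image f ∈ P1.parts.image (Finset.image f) :=
        hparts ▸ Finset.mem_image_of_mem _ hC
      obtain ⟨D, hD, hDe⟩ := Finset.mem_image.1 this
      exact image_cancel hf.injOn (P1.le hD) (P2.le hC) hDe ▸ hD
  · intro Q hQ
    simp only [Finset.mem_filter, Finset.mem_univ, true_and] at hQ
    refine ⟨(Q.mapImage g hgmono.injOn).copy himg, ?_, ?_⟩
    · simp only [Finset.mem_filter, Finset.mem_univ, true_and]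
      have h2 := hQ.mapImage hgmono
      unfold NCCond at h2 ⊢
      rw [Finpartition.parts_copy']
      exact h2
    · apply Finpartition.ext
      rw [Finpartition.parts_mapImage, Finpartition.parts_copy', Finpartition.parts_mapImage,
        Finset.image_image]
      have hCid : ∀ C ∈ Q.parts, (Finset.image f ∘ Finset.image g) C = C := by
        intro C hC
        simp only [Function.comp_apply, Finset.image_image]
        refine (Finset.image_congr fun c hc => hfg c (Q.le hC hc)).trans Finset.image_id
      ext C
      simp only [Finset.mem_image]
      constructor
      · rintro ⟨D, hD, rfl⟩
        rw [hCid D hD]; exact hD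
      · intro hC
        exact ⟨C, hC, hCid C hC⟩
  · intro P hP
    rw [Finpartition.parts_mapImage]
    rw [Finset.prod_image (fun C hC D hD h => image_cancel hf.injOn (P.le hC) (P.le hD) h)]
    exact Finset.prod_congr rfl fun C hC => by
      rw [Finset.card_image_of_injOn (hf.injOn.mono (Finset.coe_subset.2 (P.le hC)))]

lemma ncF_eq_ncMomentSum (κ : ℕ → ℂ) (T : Finset ℕ) :
    ncF κ T = ncMomentSum κ T.card := by
  have h : (Finset.univ : Finset (Fin T.card)).image (T.orderEmbOfFin rfl) = T := by
    apply Finset.coe_injective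
    rw [Finset.coe_image, Finset.coe_univ, Set.image_univ]
    exact T.range_orderEmbOfFin rfl
  rw [ncMomentSum_eq_ncF,
    ← ncF_image κ ((T.orderEmbOfFin rfl).strictMono.strictMonoOn
      (Finset.univ : Finset (Fin T.card))), h]


/-! ### Gaps and the recursion -/

def gapF (n : ℕ) (B : Finset ℕ) (t : ℕ) : Finset ℕ :=
  (Finset.range n).filter fun x => t < x ∧ ∀ u ∈ B, t < u → x < u

lemma mem_gapF {n t x : ℕ} {B : Finset ℕ} :
    x ∈ gapF n B t ↔ x < n ∧ t < x ∧ ∀ u ∈ B, t < u → x < u := by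
  simp [gapF, Finset.mem_filter, Finset.mem_range, and_assoc]

lemma gapF_subset {n t : ℕ} {B : Finset ℕ} : gapF n B t ⊆ Finset.range n :=
  Finset.filter_subset _ _

lemma gapF_disj_base {n t : ℕ} {B : Finset ℕ} : Disjoint (gapF n B t) B := by
  rw [Finset.disjoint_left]
  intro x hx hxB
  obtain ⟨_, htx, hall⟩ := mem_gapF.1 hx
  exact lt_irrefl x (hall x hxB htx)

lemma gapF_disj {n t t' : ℕ} {B : Finset ℕ} (ht : t ∈ B) (ht' : t' ∈ B) (hne : t ≠ t') :
    Disjoint (gapF n B t) (gapF n B t') := by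
  rw [Finset.disjoint_left]
  intro x hx hx'
  obtain ⟨_, htx, hall⟩ := mem_gapF.1 hx
  obtain ⟨_, htx', hall'⟩ := mem_gapF.1 hx'
  rcases hne.lt_or_gt with h | h
  · exact lt_irrefl x ((hall t' ht' h).trans htx')
  · exact lt_irrefl x ((hall' t ht h).trans htx)

lemma exists_gapF {n x : ℕ} {B : Finset ℕ} (h0 : 0 ∈ B) (hx : x < n) (hxB : x ∉ B) :
    ∃ t ∈ B, x ∈ gapF n B t := by
  have hne : (B.filter fun u => u < x).Nonempty :=
    ⟨0, Finset.mem_filter.2 ⟨h0, Nat.pos_of_ne_zero (fun h => hxB (h ▸ h0))⟩⟩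
  obtain ⟨ht1, ht2⟩ := Finset.mem_filter.1 ((B.filter fun u => u < x).max'_mem hne)
  refine ⟨(B.filter fun u => u < x).max' hne, ht1, mem_gapF.2 ⟨hx, ht2, fun u hu htu => ?_⟩⟩
  rcases lt_or_ge x u with h | h
  · exact h
  · have hux : u < x := lt_of_le_of_ne h (fun h' => hxB (h' ▸ hu))
    exact absurd htu
      (not_lt.2 (Finset.le_max' (B.filter fun u => u < x) u (Finset.mem_filter.2 ⟨hu, hux⟩)))

variable {n : ℕ} {B : Finset ℕ}

lemma part_subset_gapF (hn : 0 < n) (π : Finpartition (Finset.range n)) (hNC : NCCond π)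
    (hpart : π.part 0 = B) {C : Finset ℕ} (hC : C ∈ π.parts) (hCB : C ≠ B)
    {t x : ℕ} (ht : t ∈ B) (hx : x ∈ C) (hxg : x ∈ gapF n B t) : C ⊆ gapF n B t := by
  have h0n : (0 : ℕ) ∈ Finset.range n := Finset.mem_range.2 hn
  have hBparts : B ∈ π.parts := hpart ▸ π.part_mem.2 h0n
  have h0B : (0 : ℕ) ∈ B := hpart ▸ π.mem_part h0n
  have hdisjCB : Disjoint C B := π.disjoint hC hBparts hCB
  intro y hy
  have hyn : y < n := Finset.mem_range.1 (π.le hC hy)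
  have hyB : y ∉ B := fun h => (Finset.disjoint_left.1 hdisjCB) hy h
  obtain ⟨hxn, htx, hxall⟩ := mem_gapF.1 hxg
  refine mem_gapF.2 ⟨hyn, ?_, ?_⟩
  · by_contra hle
    push_neg at hle
    have hyt : y < t := lt_of_le_of_ne hle (fun h => hyB (h ▸ ht))
    have h0y : 0 < y := Nat.pos_of_ne_zero (fun h => hyB (h ▸ h0B))
    exact hNC ⟨0, y, t, x, h0y, hyt, htx, B, hBparts, C, hC, Ne.symm hCB, h0B, ht, hy, hx⟩
  · intro u hu htu
    by_contra hle
    push_neg at hle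
    have huy : u < y := lt_of_le_of_ne hle (fun h => hyB (h ▸ hu))
    have hxu : x < u := hxall u hu htu
    exact hNC ⟨t, x, u, y, htx, hxu, huy, B, hBparts, C, hC, Ne.symm hCB, ht, hu, hx, hy⟩

/-- Restriction of a noncrossing partition to a gap. -/
noncomputable def restrictGap (hn : 0 < n) (π : Finpartition (Finset.range n)) (hNC : NCCond π)
    (hpart : π.part 0 = B) (t : ℕ) (ht : t ∈ B) : Finpartition (gapF n B t) :=
  π.ofSubset (parts := π.parts.filter (· ⊆ gapF n B t)) (Finset.filter_subset _ _) (by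
    apply le_antisymm
    · exact Finset.sup_le fun C hC => (Finset.mem_filter.1 hC).2
    · intro x hx
      have hxn := (mem_gapF.1 hx).1
      have hxrange : x ∈ Finset.range n := Finset.mem_range.2 hxn
      have hxB : x ∉ B := Finset.disjoint_left.1 gapF_disj_base hx
      have hCmem : π.part x ∈ π.parts := π.part_mem.2 hxrange
      have hxC : x ∈ π.part x := π.mem_part hxrange
      have hCB : π.part x ≠ B := fun h => hxB (h ▸ hxC)
      have hsub := part_subset_gapF hn π hNC hpart hCmem hCB ht hxC hx
      rw [Finset.mem_sup]
      exact ⟨π.part x, Finset.mem_filter.2 ⟨hCmem, hsub⟩, hxC⟩)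

@[simp] lemma parts_restrictGap (hn : 0 < n) (π : Finpartition (Finset.range n)) (hNC : NCCond π)
    (hpart : π.part 0 = B) (t : ℕ) (ht : t ∈ B) :
    (restrictGap hn π hNC hpart t ht).parts = π.parts.filter (· ⊆ gapF n B t) := rfl

lemma NCCond_restrictGap (hn : 0 < n) (π : Finpartition (Finset.range n)) (hNC : NCCond π)
    (hpart : π.part 0 = B) (t : ℕ) (ht : t ∈ B) : NCCond (restrictGap hn π hNC hpart t ht) := by
  rintro ⟨a, b, c, d, hab, hbc, hcd, B1, hB1, B2, hB2, hne, h1, h2, h3, h4⟩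
  rw [parts_restrictGap] at hB1 hB2
  exact hNC ⟨a, b, c, d, hab, hbc, hcd, B1, (Finset.mem_filter.1 hB1).1, B2,
    (Finset.mem_filter.1 hB2).1, hne, h1, h2, h3, h4⟩

lemma parts_decompose (hn : 0 < n) (π : Finpartition (Finset.range n)) (hNC : NCCond π)
    (hpart : π.part 0 = B) :
    π.parts = insert B (Finset.univ.biUnion fun t : {x // x ∈ B} =>
      (restrictGap hn π hNC hpart t.1 t.2).parts) := by
  have h0n : (0 : ℕ) ∈ Finset.range n := Finset.mem_range.2 hn
  have hBparts : B ∈ π.parts := hpart ▸ π.part_mem.2 h0n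
  have h0B : (0 : ℕ) ∈ B := hpart ▸ π.mem_part h0n
  ext C
  simp only [Finset.mem_insert, Finset.mem_biUnion, Finset.mem_univ, true_and,
    parts_restrictGap, Finset.mem_filter]
  constructor
  · intro hC
    by_cases hCB : C = B
    · exact Or.inl hCB
    · obtain ⟨x, hx⟩ := π.nonempty_of_mem_parts hC
      have hxB : x ∉ B := fun h =>
        (Finset.disjoint_left.1 (π.disjoint hC hBparts hCB)) hx h
      have hxn : x < n := Finset.mem_range.1 (π.le hC hx)
      obtain ⟨t, htB, hxg⟩ := exists_gapF h0B hxn hxB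
      exact Or.inr ⟨⟨t, htB⟩, hC, part_subset_gapF hn π hNC hpart hC hCB htB hx hxg⟩
  · rintro (rfl | ⟨t, hC, -⟩)
    · exact hBparts
    · exact hC

lemma prod_decompose (κ : ℕ → ℂ) (hn : 0 < n) (π : Finpartition (Finset.range n))
    (hNC : NCCond π) (hpart : π.part 0 = B) :
    ∏ C ∈ π.parts, κ C.card =
      κ B.card * ∏ t : {x // x ∈ B},
        ∏ C ∈ (restrictGap hn π hNC hpart t.1 t.2).parts, κ C.card := by
  have h0n : (0 : ℕ) ∈ Finset.range n := Finset.mem_range.2 hn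
  have h0B : (0 : ℕ) ∈ B := hpart ▸ π.mem_part h0n
  have h0g : ∀ t : {x // x ∈ B}, (0 : ℕ) ∉ gapF n B t.1 := fun t h => by
    simpa using (mem_gapF.1 h).2.1
  rw [parts_decompose hn π hNC hpart, Finset.prod_insert, Finset.prod_biUnion]
  · intro t _ t' _ hne
    simp only [Function.onFun, parts_restrictGap]
    rw [Finset.disjoint_left]
    intro C hC hC'
    obtain ⟨x, hx⟩ := π.nonempty_of_mem_parts (Finset.mem_filter.1 hC).1
    have h1 := (Finset.mem_filter.1 hC).2 hx
    have h2 := (Finset.mem_filter.1 hC').2 hx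
    exact Finset.disjoint_left.1 (gapF_disj t.2 t'.2 (fun h => hne (Subtype.ext h))) h1 h2
  · intro hmem
    obtain ⟨t, -, hBt⟩ := Finset.mem_biUnion.1 hmem
    rw [parts_restrictGap] at hBt
    exact h0g t ((Finset.mem_filter.1 hBt).2 h0B)

/-- Assemble a partition of `range n` from a block `B` containing `0` and partitions of
the gaps of `B`. -/
noncomputable def unionParts (hBsub : B ⊆ Finset.range n) (h0B : 0 ∈ B)
    (g : ∀ t : {x // x ∈ B}, Finpartition (gapF n B t.1)) :
    Finpartition (Finset.range n) where
  parts := insert B (Finset.univ.biUnion fun t : {x // x ∈ B} => (g t).parts)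
  supIndep := by
    rw [Finset.supIndep_iff_pairwiseDisjoint]
    have hmem : ∀ C ∈ insert B (Finset.univ.biUnion fun t : {x // x ∈ B} => (g t).parts),
        C = B ∨ ∃ t : {x // x ∈ B}, C ∈ (g t).parts := by
      intro C hC
      rcases Finset.mem_insert.1 hC with h | h
      · exact Or.inl h
      · obtain ⟨t, -, ht⟩ := Finset.mem_biUnion.1 h
        exact Or.inr ⟨t, ht⟩
    intro C hC D hD hne
    simp only [Function.onFun, id]
    rcases hmem C hC with rfl | ⟨t, htC⟩ <;> rcases hmem D hD with rfl | ⟨t', htD⟩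
    · exact absurd rfl hne
    · exact (gapF_disj_base.mono_left ((g t').le htD)).symm
    · exact gapF_disj_base.mono_left ((g t).le htC)
    · by_cases htt : t = t'
      · subst htt
        exact (g t).disjoint htC htD hne
      · exact Finset.disjoint_left.2 fun x hx hx' =>
          Finset.disjoint_left.1 (gapF_disj t.2 t'.2 fun h => htt (Subtype.ext h))
            ((g t).le htC hx) ((g t').le htD hx')
  sup_parts := by
    apply le_antisymm
    · apply Finset.sup_le
      intro C hC
      rcases Finset.mem_insert.1 hC with rfl | h
      · exact hBsub
      · obtain ⟨t, -, ht⟩ := Finset.mem_biUnion.1 h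
        exact le_trans ((g t).le ht) gapF_subset
    · intro x hx
      rw [Finset.mem_sup]
      by_cases hxB : x ∈ B
      · exact ⟨B, Finset.mem_insert_self _ _, hxB⟩
      · obtain ⟨t, htB, hxg⟩ := exists_gapF h0B (Finset.mem_range.1 hx) hxB
        obtain ⟨C, hC, hxC⟩ := (g ⟨t, htB⟩).exists_mem hxg
        exact ⟨C, Finset.mem_insert_of_mem
          (Finset.mem_biUnion.2 ⟨⟨t, htB⟩, Finset.mem_univ _, hC⟩), hxC⟩
  bot_notMem := by
    simp only [Finset.bot_eq_empty, Finset.mem_insert]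
    rintro (h | h)
    · exact absurd (h ▸ h0B) (Finset.notMem_empty 0)
    · obtain ⟨t, -, ht⟩ := Finset.mem_biUnion.1 h
      exact (g t).bot_notMem (Finset.bot_eq_empty ▸ ht)

lemma mem_parts_unionParts (hBsub : B ⊆ Finset.range n) (h0B : 0 ∈ B)
    (g : ∀ t : {x // x ∈ B}, Finpartition (gapF n B t.1)) {C : Finset ℕ} :
    C ∈ (unionParts hBsub h0B g).parts ↔
      C = B ∨ ∃ t : {x // x ∈ B}, C ∈ (g t).parts := by
  show C ∈ insert B _ ↔ _
  simp [Finset.mem_insert, Finset.mem_biUnion]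

lemma part_zero_unionParts (hBsub : B ⊆ Finset.range n) (h0B : 0 ∈ B)
    (g : ∀ t : {x // x ∈ B}, Finpartition (gapF n B t.1)) :
    (unionParts hBsub h0B g).part 0 = B :=
  Finpartition.part_eq_of_mem _ ((mem_parts_unionParts hBsub h0B g).2 (Or.inl rfl)) h0B

lemma NCCond_unionParts (hBsub : B ⊆ Finset.range n) (h0B : 0 ∈ B)
    (g : ∀ t : {x // x ∈ B}, Finpartition (gapF n B t.1))
    (hg : ∀ t, NCCond (g t)) : NCCond (unionParts hBsub h0B g) := by
  rintro ⟨a, b, c, d, hab, hbc, hcd, B1, hB1, B2, hB2, hne, haB1, hcB1, hbB2, hdB2⟩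
  rw [mem_parts_unionParts] at hB1 hB2
  rcases hB1 with rfl | ⟨t, hB1⟩ <;> rcases hB2 with h | ⟨t', hB2⟩
  · exact hne h.symm
  · -- B1 = B, B2 in gap t'
    obtain ⟨-, htb, hall⟩ := mem_gapF.1 ((g t').le hB2 hbB2)
    have hdc := (mem_gapF.1 ((g t').le hB2 hdB2)).2.2 c hcB1 (htb.trans hbc)
    exact absurd hcd (not_lt.2 hdc.le)
  · -- B2 = B, B1 in gap t
    subst h
    obtain ⟨-, hta, -⟩ := mem_gapF.1 ((g t).le hB1 haB1)
    have hcb := (mem_gapF.1 ((g t).le hB1 hcB1)).2.2 b hbB2 (hta.trans hab)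
    exact absurd hbc (not_lt.2 hcb.le)
  · by_cases htt : t = t'
    · subst htt
      exact hg t ⟨a, b, c, d, hab, hbc, hcd, B1, hB1, B2, hB2, hne, haB1, hcB1, hbB2, hdB2⟩
    · -- b lies in gap t as well, contradiction with disjointness
      obtain ⟨-, hta, -⟩ := mem_gapF.1 ((g t).le hB1 haB1)
      obtain ⟨hcn, -, hcall⟩ := mem_gapF.1 ((g t).le hB1 hcB1)
      obtain ⟨hbn, -, -⟩ := mem_gapF.1 ((g t').le hB2 hbB2)
      have hbg : b ∈ gapF n B t.1 :=
        mem_gapF.2 ⟨hbn, hta.trans hab, fun u hu htu => hbc.trans (hcall u hu htu)⟩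
      exact Finset.disjoint_left.1 (gapF_disj t.2 t'.2 fun h => htt (Subtype.ext h))
        hbg ((g t').le hB2 hbB2)

lemma restrictGap_unionParts (hn : 0 < n) (hBsub : B ⊆ Finset.range n) (h0B : 0 ∈ B)
    (g : ∀ t : {x // x ∈ B}, Finpartition (gapF n B t.1)) (hg : ∀ t, NCCond (g t))
    (t : {x // x ∈ B}) :
    restrictGap hn (unionParts hBsub h0B g) (NCCond_unionParts hBsub h0B g hg)
      (part_zero_unionParts hBsub h0B g) t.1 t.2 = g t := by
  apply Finpartition.ext
  rw [parts_restrictGap]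
  ext C
  rw [Finset.mem_filter, mem_parts_unionParts]
  constructor
  · rintro ⟨rfl | ⟨t', hC⟩, hsub⟩
    · exact absurd (hsub h0B) (fun h => by simpa using (mem_gapF.1 h).2.1)
    · by_cases htt : t' = t
      · exact htt ▸ hC
      · obtain ⟨x, hx⟩ := (g t').nonempty_of_mem_parts hC
        exact absurd (hsub hx)
          (Finset.disjoint_left.1 (gapF_disj t'.2 t.2 fun he => htt (Subtype.ext he))
            ((g t').le hC hx))
  · intro hC
    exact ⟨Or.inr ⟨t, hC⟩, (g t).le hC⟩

lemma ncF_range_rec (κ : ℕ → ℂ) (hn : 0 < n) :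
    ncF κ (Finset.range n) =
      ∑ B ∈ (Finset.range n).powerset.filter (fun B => 0 ∈ B),
        κ B.card * ∏ t ∈ B, ncF κ (gapF n B t) := by
  have h0n : (0 : ℕ) ∈ Finset.range n := Finset.mem_range.2 hn
  rw [ncF]
  rw [← Finset.sum_fiberwise_of_maps_to
    (g := fun π : Finpartition (Finset.range n) => π.part 0)
    (t := (Finset.range n).powerset.filter (fun B => 0 ∈ B))
    (fun π _ => by
      rw [Finset.mem_filter, Finset.mem_powerset]
      exact ⟨π.le (π.part_mem.2 h0n), π.mem_part h0n⟩)]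
  apply Finset.sum_congr rfl
  intro B hB
  rw [Finset.mem_filter, Finset.mem_powerset] at hB
  obtain ⟨hBsub, h0B⟩ := hB
  rw [← Finset.prod_coe_sort B (fun t => ncF κ (gapF n B t))]
  rw [show (∏ t : {x // x ∈ B}, ncF κ (gapF n B t.1))
      = ∑ g ∈ Fintype.piFinset (fun t : {x // x ∈ B} =>
          Finset.univ.filter fun σ : Finpartition (gapF n B t.1) => NCCond σ),
        ∏ t : {x // x ∈ B}, ∏ C ∈ (g t).parts, κ C.card from
    Finset.prod_univ_sum _ _]
  rw [Finset.mul_sum]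
  refine Finset.sum_bij
    (fun π hπ => fun t : {x // x ∈ B} =>
      restrictGap hn π (Finset.mem_filter.1 (Finset.mem_filter.1 hπ).1).2
        (Finset.mem_filter.1 hπ).2 t.1 t.2) ?_ ?_ ?_ ?_
  · intro π hπ
    rw [Fintype.mem_piFinset]
    intro t
    rw [Finset.mem_filter]
    exact ⟨Finset.mem_univ _, NCCond_restrictGap _ _ _ _ _ _⟩
  · intro π1 h1 π2 h2 he
    apply Finpartition.ext
    rw [parts_decompose hn π1 (Finset.mem_filter.1 (Finset.mem_filter.1 h1).1).2
        (Finset.mem_filter.1 h1).2,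
      parts_decompose hn π2 (Finset.mem_filter.1 (Finset.mem_filter.1 h2).1).2
        (Finset.mem_filter.1 h2).2]
    congr 1
    apply Finset.biUnion_congr rfl
    intro t _
    exact congrArg Finpartition.parts (congrFun he t)
  · intro g hg
    have hgNC : ∀ t, NCCond (g t) := fun t =>
      (Finset.mem_filter.1 (Fintype.mem_piFinset.1 hg t)).2
    refine ⟨unionParts hBsub h0B g, ?_, ?_⟩
    · rw [Finset.mem_filter]
      refine ⟨Finset.mem_filter.2 ⟨Finset.mem_univ _, NCCond_unionParts hBsub h0B g hgNC⟩,
        part_zero_unionParts hBsub h0B g⟩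
    · funext t
      exact restrictGap_unionParts hn hBsub h0B g hgNC t
  · intro π hπ
    exact prod_decompose κ hn π (Finset.mem_filter.1 (Finset.mem_filter.1 hπ).1).2
      (Finset.mem_filter.1 hπ).2

/-! ### Compositions vs subsets -/

/-- Partial sums of a finitely supported sequence. -/
def psF (l : ℕ →₀ ℕ) (i : ℕ) : ℕ := ∑ i' ∈ Finset.range i, l i'

/-- The subset of `range n` associated to a composition. -/
def BofF (l : ℕ →₀ ℕ) (j : ℕ) : Finset ℕ := (Finset.range j).image (psF l)

lemma psF_zero (l : ℕ →₀ ℕ) : psF l 0 = 0 := by simp [psF]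

lemma psF_succ (l : ℕ →₀ ℕ) (i : ℕ) : psF l (i + 1) = psF l i + l i := by
  rw [psF, psF, Finset.sum_range_succ]

lemma psF_mono (l : ℕ →₀ ℕ) : Monotone (psF l) := fun i i' h =>
  Finset.sum_le_sum_of_subset (Finset.range_subset_range.2 h)

variable {l : ℕ →₀ ℕ} {j : ℕ}

lemma psF_lt (hpos : ∀ i ∈ Finset.range j, l i ≠ 0) {i i' : ℕ} (h : i < i') (h' : i' ≤ j) :
    psF l i < psF l i' := by
  have h1 : psF l i < psF l (i + 1) := by
    rw [psF_succ]
    have := hpos i (Finset.mem_range.2 (lt_of_lt_of_le h h'))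
    omega
  exact lt_of_lt_of_le h1 (psF_mono l h)

lemma psF_injOn (hpos : ∀ i ∈ Finset.range j, l i ≠ 0) :
    Set.InjOn (psF l) (Finset.range j) := by
  intro i hi i' hi' he
  simp only [Finset.coe_range, Set.mem_Iio] at hi hi'
  by_contra hne
  rcases Nat.lt_or_ge i i' with h | h
  · exact absurd he (Nat.ne_of_lt (psF_lt hpos h hi'.le))
  · exact absurd he.symm (Nat.ne_of_lt (psF_lt hpos (lt_of_le_of_ne h (Ne.symm hne)) hi.le))

lemma mem_BofF {b : ℕ} : b ∈ BofF l j ↔ ∃ i < j, psF l i = b := by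
  simp [BofF, Finset.mem_image, Finset.mem_range]

lemma psF_last {n : ℕ} (hl : l ∈ Finset.finsuppAntidiag (Finset.range j) n) : psF l j = n :=
  (Finset.mem_finsuppAntidiag.1 hl).1

lemma BofF_mem {n : ℕ} (hj : 0 < j) (hl : l ∈ Finset.finsuppAntidiag (Finset.range j) n)
    (hpos : ∀ i ∈ Finset.range j, l i ≠ 0) :
    BofF l j ⊆ Finset.range n ∧ 0 ∈ BofF l j ∧ (BofF l j).card = j := by
  refine ⟨?_, ?_, ?_⟩
  · intro b hb
    obtain ⟨i, hij, rfl⟩ := mem_BofF.1 hb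
    exact Finset.mem_range.2 (psF_last hl ▸ psF_lt hpos hij le_rfl)
  · exact mem_BofF.2 ⟨0, hj, psF_zero l⟩
  · rw [BofF, Finset.card_image_of_injOn (psF_injOn hpos), Finset.card_range]

lemma gapF_BofF {n : ℕ} (hl : l ∈ Finset.finsuppAntidiag (Finset.range j) n)
    (hpos : ∀ i ∈ Finset.range j, l i ≠ 0) {i : ℕ} (hij : i < j) :
    gapF n (BofF l j) (psF l i) = Finset.Ioo (psF l i) (psF l (i + 1)) := by
  ext x
  rw [mem_gapF, Finset.mem_Ioo]
  constructor
  · rintro ⟨hxn, hix, hall⟩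
    refine ⟨hix, ?_⟩
    rcases Nat.lt_or_ge (i + 1) j with h | h
    · exact hall _ (mem_BofF.2 ⟨i + 1, h, rfl⟩) (psF_lt hpos (Nat.lt_succ_self i) h.le)
    · have : i + 1 = j := le_antisymm hij h
      rw [this, psF_last hl]
      exact hxn
  · rintro ⟨hix, hxi⟩
    have hxn : x < n := lt_of_lt_of_le hxi (psF_last hl ▸ psF_mono l hij)
    refine ⟨hxn, hix, ?_⟩
    rintro u hu hiu
    obtain ⟨i', hi'j, rfl⟩ := mem_BofF.1 hu
    have hii' : i < i' := by
      by_contra h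
      push_neg at h
      exact absurd hiu (not_lt.2 (psF_mono l h))
    exact lt_of_lt_of_le hxi (psF_mono l hii')

lemma prod_BofF (a : ℕ → ℂ) {n : ℕ} (hl : l ∈ Finset.finsuppAntidiag (Finset.range j) n)
    (hpos : ∀ i ∈ Finset.range j, l i ≠ 0) :
    ∏ t ∈ BofF l j, a (gapF n (BofF l j) t).card = ∏ i ∈ Finset.range j, a (l i - 1) := by
  rw [BofF, Finset.prod_image (fun i hi i' hi' he => psF_injOn hpos (by simpa using hi)
    (by simpa using hi') he)]
  apply Finset.prod_congr rfl
  intro i hi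
  rw [show Finset.image (psF l) (Finset.range j) = BofF l j from rfl,
    gapF_BofF hl hpos (Finset.mem_range.1 hi), Nat.card_Ioo, psF_succ]
  congr 1
  omega

lemma comp_sum_eq (a : ℕ → ℂ) {n j : ℕ} (hj : 0 < j) :
    (∑ l ∈ (Finset.finsuppAntidiag (Finset.range j) n).filter
          (fun l => ∀ i ∈ Finset.range j, l i ≠ 0),
        ∏ i ∈ Finset.range j, a (l i - 1))
      = ∑ B ∈ (Finset.range n).powerset.filter (fun B => 0 ∈ B ∧ B.card = j),
          ∏ t ∈ B, a (gapF n B t).card := by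
  refine Finset.sum_bij (fun l _ => BofF l j) ?_ ?_ ?_ ?_
  · intro l hl
    obtain ⟨hl, hpos⟩ := Finset.mem_filter.1 hl
    obtain ⟨h1, h2, h3⟩ := BofF_mem hj hl hpos
    rw [Finset.mem_filter, Finset.mem_powerset]
    exact ⟨h1, h2, h3⟩
  · intro l1 h1 l2 h2 hB
    obtain ⟨hl1, hpos1⟩ := Finset.mem_filter.1 h1
    obtain ⟨hl2, hpos2⟩ := Finset.mem_filter.1 h2
    have hps : ∀ i, i ≤ j → psF l1 i = psF l2 i := by
      intro i
      induction i with
      | zero => intro _; rw [psF_zero, psF_zero]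
      | succ i ih =>
        intro hij
        have hii := ih (Nat.le_of_succ_le hij)
        rcases eq_or_lt_of_le hij with heq | hlt
        · rw [heq, psF_last hl1, psF_last hl2]
        · have hmin : ∀ l' : ℕ →₀ ℕ, (∀ i' ∈ Finset.range j, l' i' ≠ 0) → ∀ b ∈ BofF l' j,
              psF l' i < b → psF l' (i + 1) ≤ b := by
            intro l' hpos' b hb hlt'
            obtain ⟨i', hi'j, rfl⟩ := mem_BofF.1 hb
            have hii' : i < i' := by
              by_contra h
              push_neg at h
              exact absurd hlt' (not_lt.2 (psF_mono l' h))
            exact psF_mono l' hii'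
          have hm1 : psF l1 (i + 1) ∈ BofF l1 j := mem_BofF.2 ⟨i + 1, hlt, rfl⟩
          have hm2 : psF l2 (i + 1) ∈ BofF l2 j := mem_BofF.2 ⟨i + 1, hlt, rfl⟩
          have hlt1 : psF l1 i < psF l1 (i + 1) := psF_lt hpos1 (Nat.lt_succ_self i) hlt.le
          have hlt2 : psF l2 i < psF l2 (i + 1) := psF_lt hpos2 (Nat.lt_succ_self i) hlt.le
          have hBeq : BofF l1 j = BofF l2 j := hB
          refine le_antisymm (hmin l1 hpos1 _ (hBeq ▸ hm2) ?_) (hmin l2 hpos2 _ (hBeq ▸ hm1) ?_)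
          · rw [hii] at hlt1 ⊢
            exact hlt2
          · rw [← hii] at hlt2 ⊢
            exact hlt1
    apply Finsupp.ext
    intro i
    rcases Nat.lt_or_ge i j with hij | hij
    · have e1 := psF_succ l1 i
      have e2 := psF_succ l2 i
      have := hps i hij.le
      have := hps (i + 1) hij
      omega
    · have hs1 := (Finset.mem_finsuppAntidiag.1 hl1).2
      have hs2 := (Finset.mem_finsuppAntidiag.1 hl2).2
      have h1 : l1 i = 0 := by
        by_contra h
        exact absurd (Finset.mem_range.1 (hs1 (Finsupp.mem_support_iff.2 h))) (not_lt.2 hij)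
      have h2 : l2 i = 0 := by
        by_contra h
        exact absurd (Finset.mem_range.1 (hs2 (Finsupp.mem_support_iff.2 h))) (not_lt.2 hij)
      rw [h1, h2]
  · intro B hB
    rw [Finset.mem_filter, Finset.mem_powerset] at hB
    obtain ⟨hBsub, h0B, hcard⟩ := hB
    classical
    set bElt : ℕ → ℕ := fun i => if h : i < j then B.orderEmbOfFin hcard ⟨i, h⟩ else n
      with hbElt
    have hbElt_lt : ∀ i, i < j → bElt i < n := by
      intro i hij
      simp only [hbElt, dif_pos hij]
      exact Finset.mem_range.1 (hBsub (B.orderEmbOfFin_mem hcard ⟨i, hij⟩))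
    have hbElt_mono : ∀ i i', i < i' → i' ≤ j → bElt i < bElt i' := by
      intro i i' h h'
      have hij : i < j := lt_of_lt_of_le h h'
      rcases eq_or_lt_of_le h' with rfl | h''
      · rw [show bElt i' = n from by simp [hbElt]]
        exact hbElt_lt i hij
      · simp only [hbElt, dif_pos hij, dif_pos h'']
        exact (B.orderEmbOfFin hcard).strictMono (by exact h)
    have hbElt0 : bElt 0 = 0 := by
      simp only [hbElt, dif_pos hj]
      rw [Finset.orderEmbOfFin_zero hcard hj]
      exact le_antisymm (B.min'_le 0 h0B) (Nat.zero_le _)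
    set l : ℕ →₀ ℕ := Finsupp.onFinset (Finset.range j)
      (fun i => if i < j then bElt (i + 1) - bElt i else 0)
      (fun i h => by
        rw [Finset.mem_range]
        by_contra hij
        exact h (if_neg (fun h' => hij h'))) with hldef
    have hlval : ∀ i, i < j → l i = bElt (i + 1) - bElt i := by
      intro i hij
      simp [hldef, Finsupp.onFinset_apply, if_pos hij]
    have hps : ∀ i, i ≤ j → psF l i = bElt i := by
      intro i
      induction i with
      | zero => intro _; rw [psF_zero, hbElt0]
      | succ i ih =>
        intro hij
        rw [psF_succ, ih (Nat.le_of_succ_le hij), hlval i hij]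
        have := hbElt_mono i (i + 1) (Nat.lt_succ_self i) hij
        omega
    have hbEltj : bElt j = n := by simp [hbElt]
    have hpos : ∀ i ∈ Finset.range j, l i ≠ 0 := by
      intro i hi
      rw [hlval i (Finset.mem_range.1 hi)]
      have := hbElt_mono i (i + 1) (Nat.lt_succ_self i) (Finset.mem_range.1 hi)
      omega
    have hlmem : l ∈ Finset.finsuppAntidiag (Finset.range j) n := by
      rw [Finset.mem_finsuppAntidiag]
      constructor
      · rw [show (Finset.range j).sum l = psF l j from rfl, hps j le_rfl, hbEltj]
      · exact Finsupp.support_onFinset_subset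
    refine ⟨l, Finset.mem_filter.2 ⟨hlmem, hpos⟩, ?_⟩
    ext b
    rw [mem_BofF]
    constructor
    · rintro ⟨i, hij, rfl⟩
      rw [hps i hij.le]
      simp only [hbElt, dif_pos hij]
      exact B.orderEmbOfFin_mem hcard ⟨i, hij⟩
    · intro hb
      have : b ∈ Set.range (B.orderEmbOfFin hcard) := by
        rw [B.range_orderEmbOfFin hcard]
        exact hb
      obtain ⟨i, hi⟩ := this
      refine ⟨i.1, i.2, ?_⟩
      rw [hps i.1 i.2.le]
      simp only [hbElt, dif_pos i.2]
      rw [← hi]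
  · intro l hl
    obtain ⟨hl, hpos⟩ := Finset.mem_filter.1 hl
    exact (prod_BofF a hl hpos).symm

lemma ncMomentSum_zero (κ : ℕ → ℂ) : ncMomentSum κ 0 = 1 := by
  rw [ncMomentSum_eq_ncF, Finset.univ_eq_empty, ncF_empty]

set_option maxHeartbeats 1000000 in
/-- Master recursion for the noncrossing moment sums. -/
lemma ncMomentSum_rec (κ : ℕ → ℂ) {n : ℕ} (hn : 0 < n) :
    ncMomentSum κ n = ∑ j ∈ Finset.Icc 1 n, κ j *
      ∑ l ∈ (Finset.finsuppAntidiag (Finset.range j) n).filter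
          (fun l => ∀ i ∈ Finset.range j, l i ≠ 0),
        ∏ i ∈ Finset.range j, ncMomentSum κ (l i - 1) := by
  have h1 : ncMomentSum κ n = ncF κ (Finset.range n) := by
    rw [ncF_eq_ncMomentSum, Finset.card_range]
  rw [h1, ncF_range_rec κ hn]
  rw [← Finset.sum_fiberwise_of_maps_to (g := Finset.card) (t := Finset.Icc 1 n)
    (fun B hB => by
      rw [Finset.mem_filter, Finset.mem_powerset] at hB
      rw [Finset.mem_Icc]
      exact ⟨Finset.card_pos.2 ⟨0, hB.2⟩,
        le_trans (Finset.card_le_card hB.1) (le_of_eq (Finset.card_range n))⟩)]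
  apply Finset.sum_congr rfl
  intro j hj
  have hj1 : 0 < j := (Finset.mem_Icc.1 hj).1
  rw [Finset.filter_filter]
  calc ∑ B ∈ (Finset.range n).powerset.filter (fun B => 0 ∈ B ∧ B.card = j),
        κ B.card * ∏ t ∈ B, ncF κ (gapF n B t)
      = ∑ B ∈ (Finset.range n).powerset.filter (fun B => 0 ∈ B ∧ B.card = j),
        κ j * ∏ t ∈ B, ncMomentSum κ (gapF n B t).card := by
        apply Finset.sum_congr rfl
        intro B hB
        rw [(Finset.mem_filter.1 hB).2.2]
        congr 1
        exact Finset.prod_congr rfl fun t _ => ncF_eq_ncMomentSum κ _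
    _ = κ j * ∑ B ∈ (Finset.range n).powerset.filter (fun B => 0 ∈ B ∧ B.card = j),
        ∏ t ∈ B, ncMomentSum κ (gapF n B t).card := (Finset.mul_sum _ _ _).symm
    _ = κ j * ∑ l ∈ (Finset.finsuppAntidiag (Finset.range j) n).filter
          (fun l => ∀ i ∈ Finset.range j, l i ≠ 0),
        ∏ i ∈ Finset.range j, ncMomentSum κ (l i - 1) := by
        rw [comp_sum_eq (fun k => ncMomentSum κ k) hj1]

end Aux

/-- Composition `K(z·L(z))` of formal power series, defined coefficientwise (the inner
series `z·L(z)` has zero constant term, so each coefficient is a finite sum). -/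
noncomputable def substZL (K L : PowerSeries ℂ) : PowerSeries ℂ :=
  PowerSeries.mk fun n =>
    ∑ j ∈ Finset.range (n + 1),
      PowerSeries.coeff j K * PowerSeries.coeff n ((PowerSeries.X * L) ^ j)

section PS

/-- Coefficients of `substZL` for positive index. -/
lemma coeff_substZL (K L : PowerSeries ℂ) {n : ℕ} (hn : 0 < n) :
    (PowerSeries.coeff n) (substZL K L) =
      ∑ j ∈ Finset.Icc 1 n, (PowerSeries.coeff j) K *
        ∑ l ∈ (Finset.finsuppAntidiag (Finset.range j) n).filter
            (fun l => ∀ i ∈ Finset.range j, l i ≠ 0),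
          ∏ i ∈ Finset.range j, (PowerSeries.coeff (l i - 1)) L := by
  rw [substZL, PowerSeries.coeff_mk]
  have hrange : Finset.range (n + 1) = insert 0 (Finset.Icc 1 n) := by
    ext x
    simp only [Finset.mem_range, Finset.mem_insert, Finset.mem_Icc]
    omega
  rw [hrange, Finset.sum_insert (by simp)]
  rw [pow_zero, PowerSeries.coeff_one, if_neg hn.ne', mul_zero, zero_add]
  apply Finset.sum_congr rfl
  intro j hj
  congr 1
  rw [PowerSeries.coeff_pow]
  rw [← Finset.sum_filter_add_sum_filter_not (Finset.finsuppAntidiag (Finset.range j) n)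
    (fun l => ∀ i ∈ Finset.range j, l i ≠ 0)]
  have hz : ∑ l ∈ (Finset.finsuppAntidiag (Finset.range j) n).filter
      (fun l => ¬ ∀ i ∈ Finset.range j, l i ≠ 0),
      ∏ i ∈ Finset.range j, (PowerSeries.coeff (l i)) (PowerSeries.X * L) = 0 := by
    apply Finset.sum_eq_zero
    intro l hl
    obtain ⟨-, hbad⟩ := Finset.mem_filter.1 hl
    push_neg at hbad
    obtain ⟨i, hi, hi0⟩ := hbad
    apply Finset.prod_eq_zero hi
    rw [hi0, PowerSeries.coeff_zero_X_mul]
  rw [hz, add_zero]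
  apply Finset.sum_congr rfl
  intro l hl
  obtain ⟨-, hposl⟩ := Finset.mem_filter.1 hl
  apply Finset.prod_congr rfl
  intro i hi
  have h1 : l i ≠ 0 := hposl i hi
  rw [show l i = (l i - 1) + 1 by omega, PowerSeries.coeff_succ_X_mul]
  congr 1

end PS


/-- Two sequences `(m_n)`, `(κ_n)` satisfy the free moment-cumulant relations
`m_n = ∑_{π ∈ NC(n)} ∏_{B ∈ π} κ_{|B|}` for all `n ≥ 1` if and only if the generating
functions `L(z) = 1 + ∑ m_n zⁿ` and `K(z) = 1 + ∑ κ_n zⁿ` satisfy `L(z) = K(z L(z))`. -/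
theorem free_moment_cumulant_iff_generating_function (m κ : ℕ → ℂ) :
    (∀ n : ℕ, 1 ≤ n → m n = ncMomentSum κ n) ↔
      (PowerSeries.mk fun n => if n = 0 then 1 else m n) =
        substZL (PowerSeries.mk fun n => if n = 0 then 1 else κ n)
          (PowerSeries.mk fun n => if n = 0 then 1 else m n) := by
  set L := PowerSeries.mk fun n => if n = 0 then 1 else m n with hL
  set K := PowerSeries.mk fun n => if n = 0 then 1 else κ n with hK
  have hKc : ∀ j, 1 ≤ j → (PowerSeries.coeff j) K = κ j := fun j hj => by
    rw [hK, PowerSeries.coeff_mk, if_neg (by omega)]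
  have hLc0 : (PowerSeries.coeff 0) L = 1 := by rw [hL, PowerSeries.coeff_mk, if_pos rfl]
  constructor
  · intro h
    have hLa : ∀ k, (PowerSeries.coeff k) L = ncMomentSum κ k := by
      intro k
      rcases Nat.eq_zero_or_pos k with rfl | hk
      · rw [hLc0, ncMomentSum_zero]
      · rw [hL, PowerSeries.coeff_mk, if_neg hk.ne', h k hk]
    ext n
    rcases Nat.eq_zero_or_pos n with rfl | hn
    · rw [hLc0, substZL, PowerSeries.coeff_mk]
      rw [show Finset.range (0 + 1) = {0} from rfl, Finset.sum_singleton, pow_zero]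
      rw [hK, PowerSeries.coeff_mk, if_pos rfl]
      simp
    · rw [hLa n, coeff_substZL K L hn, ncMomentSum_rec κ hn]
      apply Finset.sum_congr rfl
      intro j hj
      rw [hKc j (Finset.mem_Icc.1 hj).1]
      exact congrArg (fun z => κ j * z) (Finset.sum_congr rfl fun l hl =>
        Finset.prod_congr rfl fun i hi => (hLa _).symm)
  · intro h
    suffices H : ∀ n, 0 < n → m n = ncMomentSum κ n by exact fun n hn => H n hn
    intro n
    induction n using Nat.strong_induction_on with
    | _ n ih =>
      intro hn
      have hc := congrArg (PowerSeries.coeff n) h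
      rw [coeff_substZL K L hn] at hc
      rw [show (PowerSeries.coeff n) L = m n from by
        rw [hL, PowerSeries.coeff_mk, if_neg hn.ne']] at hc
      rw [hc, ncMomentSum_rec κ hn]
      apply Finset.sum_congr rfl
      intro j hj
      obtain ⟨hj1, hjn⟩ := Finset.mem_Icc.1 hj
      rw [hKc j hj1]
      refine congrArg (fun z => κ j * z) (Finset.sum_congr rfl fun l hl => ?_)
      obtain ⟨hanti, hposl⟩ := Finset.mem_filter.1 hl
      apply Finset.prod_congr rfl
      intro i hi
      have hsum := (Finset.mem_finsuppAntidiag.1 hanti).1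
      have hle : l i ≤ n := hsum ▸
        Finset.single_le_sum (f := fun i => l i) (fun _ _ => Nat.zero_le _) hi
      have hlin : l i ≠ 0 := hposl i hi
      rcases Nat.eq_zero_or_pos (l i - 1) with h0 | hpos
      · rw [h0, hLc0, ncMomentSum_zero]
      · have hlt : l i - 1 < n := by omega
        rw [hL, PowerSeries.coeff_mk, if_neg hpos.ne', ih _ hlt hpos]
end
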